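/- arXiv:2503.11929 — 2 statements merged into one kernel-verified Lean document; each statement's English description precedes it below -/
import Mathlib

section
/- Let 0 ≤ α* < 1 and L > 0. If z : (0, L] → ℝ is locally absolutely continuous on (0, L), satisfies z(x) → 0 as x → 0⁺, and ∫₀^L x^{α*} z'(x)² dx < ∞, then ∫₀^L x^{α*-2} z(x)² dx ≤ (4/(α*-1)²) ∫₀^L x^{α*} z'(x)² dx. -/
open MeasureTheory Set Filter
open scoped ENNReal

private lemma lintegral_sq_cs {α : Type*} [MeasurableSpace α] (μ : Measure α)
    {f g : α → ℝ≥0∞} (hf : AEMeasurable f μ) (hg : AEMeasurable g μ) :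
    (∫⁻ a, f a * g a ∂μ) ^ 2 ≤ (∫⁻ a, f a ^ 2 ∂μ) * (∫⁻ a, g a ^ 2 ∂μ) := by
  have hpq : (2:ℝ).HolderConjugate 2 := Real.HolderConjugate.two_two
  have h := ENNReal.lintegral_mul_le_Lp_mul_Lq μ hpq hf hg
  have h2 : ∀ x : ℝ≥0∞, x ^ (2:ℝ) = x ^ (2:ℕ) := fun x => by
    rw [← ENNReal.rpow_natCast x 2]; norm_num
  have h3 : ∀ x : ℝ≥0∞, (x ^ ((1:ℝ)/2)) ^ (2:ℕ) = x := fun x => by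
    rw [← ENNReal.rpow_natCast (x ^ ((1:ℝ)/2)) 2, ← ENNReal.rpow_mul]
    norm_num
  calc (∫⁻ a, f a * g a ∂μ) ^ 2
      ≤ ((∫⁻ a, f a ^ (2:ℝ) ∂μ) ^ ((1:ℝ)/2) * (∫⁻ a, g a ^ (2:ℝ) ∂μ) ^ ((1:ℝ)/2)) ^ 2 := by
        gcongr
        exact h
    _ = (∫⁻ a, f a ^ 2 ∂μ) * (∫⁻ a, g a ^ 2 ∂μ) := by
        rw [mul_pow, h3, h3]
        simp_rw [h2]

/-- Hardy-type inequality for `0 ≤ α* < 1` with vanishing at the left endpoint. -/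
theorem stmt0 (αs L : ℝ) (hα0 : 0 ≤ αs) (hα1 : αs < 1) (hL : 0 < L)
    (z z' : ℝ → ℝ)
    (hAC : ∀ a b : ℝ, 0 < a → a ≤ b → b < L →
      IntervalIntegrable z' volume a b ∧ z b - z a = ∫ μ in a..b, z' μ)
    (h0 : Tendsto z (nhdsWithin 0 (Ioi 0)) (nhds 0))
    (hint : IntegrableOn (fun x => x ^ αs * (z' x) ^ 2) (Ioo 0 L)) :
    ∫ x in Ioo 0 L, x ^ (αs - 2) * (z x) ^ 2
      ≤ (4 / (αs - 1) ^ 2) * ∫ x in Ioo 0 L, x ^ αs * (z' x) ^ 2 := by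
  set ν := volume.restrict (Ioo (0:ℝ) L) with hν
  set s : ℝ := (1 + αs) / 2 with hsdef
  have hαs : αs < s := by rw [hsdef]; linarith
  have hs1 : s < 1 := by rw [hsdef]; linarith
  have hs0 : 0 < s := by rw [hsdef]; linarith
  -- measurability of |z'|
  have hw : AEMeasurable (fun t => |z' t|) ν := by
    have h1 : AEMeasurable (fun x : ℝ => x ^ αs * z' x ^ 2) ν := hint.1.aemeasurable
    have h2 : AEMeasurable (fun x : ℝ => Real.sqrt (x ^ (-αs) * (x ^ αs * z' x ^ 2))) ν :=
      Real.continuous_sqrt.measurable.comp_aemeasurable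
        (((measurable_id.pow measurable_const).aemeasurable).mul h1)
    refine h2.congr ?_
    filter_upwards [ae_restrict_mem measurableSet_Ioo] with x hx
    have hx0 : (0:ℝ) < x := hx.1
    rw [← mul_assoc, ← Real.rpow_add hx0]
    norm_num
    exact Real.sqrt_sq_eq_abs _
  have hz'sq : AEMeasurable (fun t => z' t ^ 2) ν := by
    refine (hw.mul hw).congr ?_
    filter_upwards with t
    rw [Pi.mul_apply, abs_mul_abs_self, sq]
  set g : ℝ → ℝ≥0∞ := fun t => ENNReal.ofReal (t ^ s * z' t ^ 2) with hgdef
  have hgmeas : AEMeasurable g ν :=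
    ENNReal.measurable_ofReal.comp_aemeasurable
      (((measurable_id.pow measurable_const).aemeasurable).mul hz'sq)
  set G : ℝ → ℝ≥0∞ := fun x => ∫⁻ t in Ioc 0 x, g t with hGdef
  -- Claim 1
  have claim1 : ∀ x ∈ Ioo (0:ℝ) L,
      ENNReal.ofReal (z x ^ 2) ≤ ENNReal.ofReal (x ^ (1 - s) / (1 - s)) * G x := by
    rintro x ⟨hx0, hxL⟩
    have hsub : Ioc (0:ℝ) x ⊆ Ioo 0 L := fun t ht => ⟨ht.1, lt_of_le_of_lt ht.2 hxL⟩
    have hwx : AEMeasurable (fun t => |z' t|) (volume.restrict (Ioc 0 x)) :=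
      hw.mono_measure (Measure.restrict_mono hsub le_rfl)
    -- the weight integral
    have hXint : IntegrableOn (fun t : ℝ => t ^ (-s)) (Ioc 0 x) := by
      rw [← intervalIntegrable_iff_integrableOn_Ioc_of_le hx0.le]
      exact intervalIntegral.intervalIntegrable_rpow' (by linarith)
    have hXval : (∫⁻ t in Ioc 0 x, ENNReal.ofReal (t ^ (-s)))
        = ENNReal.ofReal (x ^ (1 - s) / (1 - s)) := by
      rw [← ofReal_integral_eq_lintegral_ofReal hXint ?_]
      · congr 1
        rw [← intervalIntegral.integral_of_le hx0.le, integral_rpow (Or.inl (by linarith)),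
          Real.zero_rpow (by linarith : -s + 1 ≠ 0)]
        have hexp : -s + 1 = 1 - s := by ring
        rw [hexp, sub_zero]
      · filter_upwards [ae_restrict_mem measurableSet_Ioc] with t ht
        exact Real.rpow_nonneg ht.1.le _
    -- Cauchy–Schwarz
    have hfm : AEMeasurable (fun t : ℝ => ENNReal.ofReal (t ^ (-s/2)))
        (volume.restrict (Ioc 0 x)) :=
      ((measurable_id.pow measurable_const).ennreal_ofReal).aemeasurable
    have hgm : AEMeasurable (fun t : ℝ => ENNReal.ofReal (t ^ (s/2) * |z' t|))
        (volume.restrict (Ioc 0 x)) :=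
      ENNReal.measurable_ofReal.comp_aemeasurable
        (((measurable_id.pow measurable_const).aemeasurable).mul hwx)
    have hCS := lintegral_sq_cs (volume.restrict (Ioc 0 x)) hfm hgm
    have e1 : (∫⁻ t in Ioc 0 x,
          ENNReal.ofReal (t ^ (-s/2)) * ENNReal.ofReal (t ^ (s/2) * |z' t|))
        = ∫⁻ t in Ioc 0 x, ENNReal.ofReal |z' t| := by
      refine lintegral_congr_ae ?_
      filter_upwards [ae_restrict_mem measurableSet_Ioc] with t ht
      rw [← ENNReal.ofReal_mul (Real.rpow_nonneg ht.1.le _), ← mul_assoc,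
        ← Real.rpow_add ht.1]
      rw [show -s / 2 + s / 2 = 0 by ring, Real.rpow_zero, one_mul]
    have e2 : (∫⁻ t in Ioc 0 x, ENNReal.ofReal (t ^ (-s/2)) ^ 2)
        = ∫⁻ t in Ioc 0 x, ENNReal.ofReal (t ^ (-s)) := by
      refine lintegral_congr_ae ?_
      filter_upwards [ae_restrict_mem measurableSet_Ioc] with t ht
      rw [← ENNReal.ofReal_pow (Real.rpow_nonneg ht.1.le _),
        ← Real.rpow_natCast (t ^ (-s/2)) 2, ← Real.rpow_mul ht.1.le]
      norm_num
    have e3 : (∫⁻ t in Ioc 0 x, ENNReal.ofReal (t ^ (s/2) * |z' t|) ^ 2) = G x := by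
      refine lintegral_congr_ae ?_
      filter_upwards [ae_restrict_mem measurableSet_Ioc] with t ht
      rw [← ENNReal.ofReal_pow (mul_nonneg (Real.rpow_nonneg ht.1.le _) (abs_nonneg _)), mul_pow,
        ← Real.rpow_natCast (t ^ (s/2)) 2, ← Real.rpow_mul ht.1.le, sq_abs]
      norm_num
      rfl
    rw [e1, e2, e3, hXval] at hCS
    set A := ∫⁻ t in Ioc 0 x, ENNReal.ofReal |z' t| with hAdef
    by_cases hGx : G x = ⊤
    · rw [hGx, ENNReal.mul_top]
      · exact le_top
      · simp only [ne_eq, ENNReal.ofReal_eq_zero, not_le]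
        exact div_pos (Real.rpow_pos_of_pos hx0 _) (by linarith)
    · have hfin : ENNReal.ofReal (x ^ (1 - s) / (1 - s)) * G x ≠ ⊤ :=
        ENNReal.mul_ne_top ENNReal.ofReal_ne_top hGx
      have hAfin : A ≠ ⊤ := by
        intro h
        refine hfin (top_le_iff.mp ?_)
        have htop : (⊤ : ℝ≥0∞) ^ 2 = ⊤ := by simp
        rw [h, htop] at hCS
        exact hCS
      have hzx : |z x| ≤ A.toReal := by
        have habs : Tendsto (fun a => |z a|) (nhdsWithin 0 (Ioi 0)) (nhds 0) := by
          have h := h0.abs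
          rwa [abs_zero] at h
        have hlim : Tendsto (fun a => |z a| + A.toReal) (nhdsWithin 0 (Ioi 0))
            (nhds A.toReal) := by
          have := habs.add_const A.toReal
          rwa [zero_add] at this
        refine ge_of_tendsto hlim ?_
        filter_upwards [Ioo_mem_nhdsGT_of_mem (left_mem_Ico.mpr hx0)] with a ha
        obtain ⟨hii, hftc⟩ := hAC a x ha.1 ha.2.le hxL
        have h1 : |z x| ≤ |z a| + |z x - z a| := by
          simpa using abs_add_le (z a) (z x - z a)
        have h2 : |z x - z a| ≤ ∫ t in a..x, |z' t| := by
          rw [hftc]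
          exact intervalIntegral.abs_integral_le_integral_abs ha.2.le
        have hi : IntegrableOn (fun t => |z' t|) (Ioc a x) :=
          ((intervalIntegrable_iff_integrableOn_Ioc_of_le ha.2.le).mp hii).abs
        have h3 : ∫ t in a..x, |z' t| ≤ A.toReal := by
          rw [intervalIntegral.integral_of_le ha.2.le]
          have hofr := ofReal_integral_eq_lintegral_ofReal hi
            (by filter_upwards with t using abs_nonneg _)
          have hle : (∫⁻ t in Ioc a x, ENNReal.ofReal |z' t|) ≤ A :=
            lintegral_mono' (Measure.restrict_mono (Ioc_subset_Ioc_left ha.1.le) le_rfl) le_rfl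
          have hnn : 0 ≤ ∫ t in Ioc a x, |z' t| :=
            setIntegral_nonneg measurableSet_Ioc fun t _ => abs_nonneg _
          calc ∫ t in Ioc a x, |z' t|
              = (ENNReal.ofReal (∫ t in Ioc a x, |z' t|)).toReal := by
                rw [ENNReal.toReal_ofReal hnn]
            _ = (∫⁻ t in Ioc a x, ENNReal.ofReal |z' t|).toReal := by rw [hofr]
            _ ≤ A.toReal := ENNReal.toReal_mono hAfin hle
        linarith
      calc ENNReal.ofReal (z x ^ 2) = ENNReal.ofReal (|z x| ^ 2) := by rw [sq_abs]
        _ ≤ ENNReal.ofReal (A.toReal ^ 2) :=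
            ENNReal.ofReal_le_ofReal (pow_le_pow_left₀ (abs_nonneg _) hzx 2)
        _ = A ^ 2 := by
            rw [ENNReal.ofReal_pow ENNReal.toReal_nonneg, ENNReal.ofReal_toReal hAfin]
        _ ≤ _ := hCS
  -- continuity of z on the open interval
  have hzcont : ContinuousOn z (Ioo 0 L) := by
    intro x hx
    obtain ⟨hx0, hxL⟩ := hx
    set a := x / 2 with hadef
    set b := (x + L) / 2 with hbdef
    have ha0 : 0 < a := by rw [hadef]; positivity
    have hab : a < x := by rw [hadef]; linarith
    have hxb : x < b := by rw [hbdef]; linarith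
    have hbL : b < L := by rw [hbdef]; linarith
    have hab' : a ≤ b := by linarith
    have hii : IntervalIntegrable z' volume a b := (hAC a b ha0 hab' hbL).1
    have hcont1 : ContinuousOn (fun u => z a + ∫ t in a..u, z' t) (Icc a b) := by
      refine continuousOn_const.add ?_
      have := intervalIntegral.continuousOn_primitive_interval
        (f := z') (a := a) (b := b) (μ := volume) ?_
      · rwa [uIcc_of_le hab'] at this
      · rw [uIcc_of_le hab']
        exact (intervalIntegrable_iff_integrableOn_Icc_of_le hab').mp hii
    have heq : ∀ u ∈ Icc a b, z u = z a + ∫ t in a..u, z' t := by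
      intro u hu
      have h := (hAC a u ha0 hu.1 (lt_of_le_of_lt hu.2 hbL)).2
      linarith
    have hc : ContinuousAt (fun u => z a + ∫ t in a..u, z' t) x :=
      hcont1.continuousAt (Icc_mem_nhds hab hxb)
    have : ContinuousAt z x := by
      refine hc.congr ?_
      filter_upwards [Ioo_mem_nhds hab hxb] with u hu
      exact (heq u (Ioo_subset_Icc_self hu)).symm
    exact this.continuousWithinAt
  -- step1
  have step1 : (∫⁻ x in Ioo 0 L, ENNReal.ofReal (x ^ (αs - 2) * z x ^ 2))
      ≤ ∫⁻ x in Ioo 0 L, ENNReal.ofReal (x ^ (αs - 1 - s) / (1 - s)) * G x := by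
    refine lintegral_mono_ae ?_
    filter_upwards [ae_restrict_mem measurableSet_Ioo] with x hx
    have hx0 := hx.1
    calc ENNReal.ofReal (x ^ (αs - 2) * z x ^ 2)
        = ENNReal.ofReal (x ^ (αs - 2)) * ENNReal.ofReal (z x ^ 2) :=
          ENNReal.ofReal_mul (Real.rpow_nonneg hx0.le _)
      _ ≤ ENNReal.ofReal (x ^ (αs - 2)) * (ENNReal.ofReal (x ^ (1 - s) / (1 - s)) * G x) := by
          gcongr
          exact claim1 x hx
      _ = ENNReal.ofReal (x ^ (αs - 2) * (x ^ (1 - s) / (1 - s))) * G x := by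
          rw [← mul_assoc, ← ENNReal.ofReal_mul (Real.rpow_nonneg hx0.le _)]
      _ = ENNReal.ofReal (x ^ (αs - 1 - s) / (1 - s)) * G x := by
          congr 2
          rw [mul_div_assoc', ← Real.rpow_add hx0]
          congr 2
          ring
  -- the kernel for Tonelli
  set K : ℝ × ℝ → ℝ≥0∞ := fun p => {q : ℝ × ℝ | q.2 ≤ q.1}.indicator
    (fun q => ENNReal.ofReal (q.1 ^ (αs - 1 - s) / (1 - s)) * g q.2) p with hKdef
  have hKmeas : AEMeasurable K (ν.prod ν) := by
    refine AEMeasurable.indicator ?_ (measurableSet_le measurable_snd measurable_fst)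
    exact (((measurable_fst.pow measurable_const).div_const (1 - s)).ennreal_ofReal).aemeasurable.mul
      (hgmeas.comp_snd)
  have hKx : ∀ x t : ℝ, K (x, t)
      = (Iic x).indicator (fun t => ENNReal.ofReal (x ^ (αs - 1 - s) / (1 - s)) * g t) t := by
    intro x t
    by_cases h : t ≤ x <;> simp [hKdef, Set.indicator, h]
  have hKt : ∀ x t : ℝ, K (x, t)
      = (Ici t).indicator (fun x => ENNReal.ofReal (x ^ (αs - 1 - s) / (1 - s)) * g t) x := by
    intro x t
    by_cases h : t ≤ x <;> simp [hKdef, Set.indicator, h]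
  -- step2
  have step2 : (∫⁻ x in Ioo 0 L, ENNReal.ofReal (x ^ (αs - 1 - s) / (1 - s)) * G x)
      = ∫⁻ x in Ioo 0 L, ∫⁻ t in Ioo 0 L, K (x, t) := by
    refine lintegral_congr_ae ?_
    filter_upwards [ae_restrict_mem measurableSet_Ioo] with x hx
    simp_rw [hKx x]
    rw [lintegral_indicator measurableSet_Iic, Measure.restrict_restrict measurableSet_Iic]
    have hsets : Iic x ∩ Ioo 0 L = Ioc 0 x := by
      ext t
      constructor
      · rintro ⟨h1, h2, _⟩; exact ⟨h2, h1⟩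
      · rintro ⟨h1, h2⟩; exact ⟨h2, h1, lt_of_le_of_lt h2 hx.2⟩
    rw [hsets, lintegral_const_mul' _ _ ENNReal.ofReal_ne_top]
  -- step3: Tonelli
  have step3 : (∫⁻ x in Ioo 0 L, ∫⁻ t in Ioo 0 L, K (x, t))
      = ∫⁻ t in Ioo 0 L, ∫⁻ x in Ioo 0 L, K (x, t) :=
    lintegral_lintegral_swap hKmeas
  -- step4
  have hr : αs - 1 - s < -1 := by linarith
  have step4 : ∀ t ∈ Ioo (0:ℝ) L, (∫⁻ x in Ioo 0 L, K (x, t))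
      ≤ g t * ENNReal.ofReal (t ^ (αs - s) / ((s - αs) * (1 - s))) := by
    rintro t ⟨ht0, htL⟩
    simp_rw [hKt _ t]
    rw [lintegral_indicator measurableSet_Ici, Measure.restrict_restrict measurableSet_Ici]
    have hmono : (∫⁻ x in Ici t ∩ Ioo 0 L, ENNReal.ofReal (x ^ (αs - 1 - s) / (1 - s)) * g t)
        ≤ ∫⁻ x in Ioi t, ENNReal.ofReal (x ^ (αs - 1 - s) / (1 - s)) * g t := by
      refine le_trans (lintegral_mono_set inter_subset_left) (le_of_eq ?_)
      exact setLIntegral_congr (Filter.EventuallyEq.symm Ioi_ae_eq_Ici)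
    refine hmono.trans ?_
    rw [lintegral_mul_const' _ _ ENNReal.ofReal_ne_top]
    have hIint : IntegrableOn (fun x : ℝ => x ^ (αs - 1 - s) / (1 - s)) (Ioi t) :=
      (integrableOn_Ioi_rpow_of_lt hr ht0).div_const _
    have hIval : (∫⁻ x in Ioi t, ENNReal.ofReal (x ^ (αs - 1 - s) / (1 - s)))
        = ENNReal.ofReal (t ^ (αs - s) / ((s - αs) * (1 - s))) := by
      rw [← ofReal_integral_eq_lintegral_ofReal hIint ?_]
      · congr 1
        rw [integral_div, integral_Ioi_rpow_of_lt hr ht0]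
        have he : αs - 1 - s + 1 = αs - s := by ring
        rw [he]
        rw [div_div]
        rw [neg_div, ← div_neg]
        congr 1
        ring
      · filter_upwards [ae_restrict_mem measurableSet_Ioi] with y hy
        have hy0 : (0:ℝ) < y := lt_trans ht0 hy
        have h1s : (0:ℝ) < 1 - s := by linarith
        positivity
    rw [hIval, mul_comm]
  -- step5: combine
  have hc' : (s - αs) * (1 - s) = (αs - 1) ^ 2 / 4 := by
    rw [hsdef]; ring
  have step5 : (∫⁻ x in Ioo 0 L, ENNReal.ofReal (x ^ (αs - 2) * z x ^ 2))
      ≤ ENNReal.ofReal (4 / (αs - 1) ^ 2)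
        * ∫⁻ t in Ioo 0 L, ENNReal.ofReal (t ^ αs * z' t ^ 2) := by
    refine step1.trans ?_
    rw [step2, step3]
    have hptwise : ∀ᵐ t ∂ν, (∫⁻ x in Ioo 0 L, K (x, t))
        ≤ ENNReal.ofReal (4 / (αs - 1) ^ 2) * ENNReal.ofReal (t ^ αs * z' t ^ 2) := by
      filter_upwards [ae_restrict_mem measurableSet_Ioo] with t ht
      have ht0 := ht.1
      have hnn1 : (0:ℝ) ≤ t ^ s * z' t ^ 2 := by
        have := Real.rpow_nonneg ht0.le s
        positivity
      have hnn2 : (0:ℝ) ≤ 4 / (αs - 1) ^ 2 := by positivity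
      refine (step4 t ht).trans (le_of_eq ?_)
      rw [hgdef]
      rw [← ENNReal.ofReal_mul hnn1, ← ENNReal.ofReal_mul hnn2]
      congr 1
      have h1 : t ^ s * z' t ^ 2 * (t ^ (αs - s) / ((s - αs) * (1 - s)))
          = (t ^ s * t ^ (αs - s)) * z' t ^ 2 / ((s - αs) * (1 - s)) := by ring
      rw [h1, ← Real.rpow_add ht0, hc']
      have he : s + (αs - s) = αs := by ring
      rw [he]
      have hne : (αs - 1) ^ 2 ≠ 0 := by
        have : αs - 1 ≠ 0 := by linarith
        positivity
      field_simp
    calc (∫⁻ t in Ioo 0 L, ∫⁻ x in Ioo 0 L, K (x, t))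
        ≤ ∫⁻ t in Ioo 0 L, ENNReal.ofReal (4 / (αs - 1) ^ 2)
            * ENNReal.ofReal (t ^ αs * z' t ^ 2) := lintegral_mono_ae hptwise
      _ = _ := lintegral_const_mul' _ _ ENNReal.ofReal_ne_top
  -- convert to real integrals
  have hRnn : 0 ≤ᵐ[ν] fun t => t ^ αs * z' t ^ 2 := by
    filter_upwards [ae_restrict_mem measurableSet_Ioo] with t ht
    have := Real.rpow_nonneg ht.1.le αs
    positivity
  have hRrepr : (∫⁻ t in Ioo 0 L, ENNReal.ofReal (t ^ αs * z' t ^ 2))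
      = ENNReal.ofReal (∫ t in Ioo 0 L, t ^ αs * z' t ^ 2) :=
    (ofReal_integral_eq_lintegral_ofReal hint hRnn).symm
  have hLnn : 0 ≤ᵐ[ν] fun x => x ^ (αs - 2) * z x ^ 2 := by
    filter_upwards [ae_restrict_mem measurableSet_Ioo] with x hx
    have := Real.rpow_nonneg hx.1.le (αs - 2)
    positivity
  have hLmeas : AEStronglyMeasurable (fun x => x ^ (αs - 2) * z x ^ 2) ν := by
    have hzm : AEStronglyMeasurable z ν := hzcont.aestronglyMeasurable measurableSet_Ioo
    have : AEStronglyMeasurable (fun x : ℝ => x ^ (αs - 2) * (z x * z x)) ν :=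
      ((measurable_id.pow measurable_const).aestronglyMeasurable).mul (hzm.mul hzm)
    refine this.congr ?_
    filter_upwards with x
    rw [sq]
  have hLrepr : ∫ x in Ioo 0 L, x ^ (αs - 2) * z x ^ 2
      = (∫⁻ x in Ioo 0 L, ENNReal.ofReal (x ^ (αs - 2) * z x ^ 2)).toReal := by
    rw [integral_eq_lintegral_of_nonneg_ae hLnn hLmeas]
  have hRnn' : 0 ≤ ∫ t in Ioo 0 L, t ^ αs * z' t ^ 2 :=
    setIntegral_nonneg measurableSet_Ioo fun t ht => by
      have := Real.rpow_nonneg ht.1.le αs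
      positivity
  have hcnn : (0:ℝ) ≤ 4 / (αs - 1) ^ 2 := by positivity
  have hfin : ENNReal.ofReal (4 / (αs - 1) ^ 2)
      * ENNReal.ofReal (∫ t in Ioo 0 L, t ^ αs * z' t ^ 2) ≠ ⊤ :=
    ENNReal.mul_ne_top ENNReal.ofReal_ne_top ENNReal.ofReal_ne_top
  rw [hLrepr]
  rw [hRrepr] at step5
  have := ENNReal.toReal_mono hfin step5
  rwa [ENNReal.toReal_mul, ENNReal.toReal_ofReal hcnn, ENNReal.toReal_ofReal hRnn'] at this
end

section
/- Let 1 < α* < 2 and L > 0. If z : [0, L) → ℝ is locally absolutely continuous on (0, L), satisfies z(x) → 0 as x → L⁻, and ∫₀^L x^{α*} z'(x)² dx < ∞, then ∫₀^L x^{α*-2} z(x)² dx ≤ (4/(α*-1)²) ∫₀^L x^{α*} z'(x)² dx. -/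
open MeasureTheory Set Filter
open scoped ENNReal

private lemma measurable_rpow_const_aux (c : ℝ) : Measurable fun x : ℝ => x ^ c := by
  measurability

set_option maxHeartbeats 1000000

/-- Hardy-type inequality for `1 < α* < 2` with vanishing at the right endpoint. -/
theorem stmt1 (αs L : ℝ) (hα1 : 1 < αs) (hα2 : αs < 2) (hL : 0 < L)
    (z z' : ℝ → ℝ)
    (hAC : ∀ a b : ℝ, 0 < a → a ≤ b → b < L →
      IntervalIntegrable z' volume a b ∧ z b - z a = ∫ μ in a..b, z' μ)
    (hLlim : Tendsto z (nhdsWithin L (Iio L)) (nhds 0))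
    (hint : IntegrableOn (fun x => x ^ αs * (z' x) ^ 2) (Ioo 0 L)) :
    ∫ x in Ioo 0 L, x ^ (αs - 2) * (z x) ^ 2
      ≤ (4 / (αs - 1) ^ 2) * ∫ x in Ioo 0 L, x ^ αs * (z' x) ^ 2 := by
  have hα0 : (0:ℝ) < αs - 1 := by linarith
  set γ : ℝ := (αs + 1) / 2 with hγdef
  have hγ1 : 1 < γ := by rw [hγdef]; linarith
  have hγα : γ < αs := by rw [hγdef]; linarith
  have hγδ : γ - 1 = (αs - 1) / 2 := by rw [hγdef]; ring
  -- local integrability of z'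
  have hz'loc : ∀ a b : ℝ, 0 < a → a ≤ b → b < L → IntegrableOn z' (Ioc a b) := by
    intro a b ha hab hb
    exact (intervalIntegrable_iff_integrableOn_Ioc_of_le hab).1 ((hAC a b ha hab hb).1)
  -- measurability of z' on (0, L)
  have hcover : (⋃ n : ℕ, Ioc (L / (n + 3)) (L - L / (n + 3))) = Ioo 0 L := by
    ext t
    simp only [mem_iUnion, mem_Ioc, mem_Ioo]
    constructor
    · rintro ⟨n, h1, h2⟩
      have hn3 : (0:ℝ) < (n:ℝ) + 3 := by positivity
      have hpos : 0 < L / ((n:ℝ) + 3) := by positivity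
      exact ⟨lt_trans hpos h1, by linarith⟩
    · rintro ⟨h1, h2⟩
      obtain ⟨n, hn⟩ := exists_nat_gt (max (L / t) (L / (L - t)))
      have hn3 : (0:ℝ) < (n:ℝ) + 3 := by positivity
      refine ⟨n, ?_, ?_⟩
      · have h3 : L / t < (n:ℝ) + 3 := lt_of_le_of_lt (le_max_left _ _) (by linarith)
        rw [div_lt_iff₀ h1] at h3
        rw [div_lt_iff₀ hn3]
        linarith [h3]
      · have h3 : L / (L - t) < (n:ℝ) + 3 := lt_of_le_of_lt (le_max_right _ _) (by linarith)
        rw [div_lt_iff₀ (by linarith : (0:ℝ) < L - t)] at h3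
        have : L / ((n:ℝ) + 3) < L - t := by
          rw [div_lt_iff₀ hn3]
          linarith [h3]
        linarith
  have hseg : ∀ n : ℕ, L / ((n:ℝ) + 3) ≤ L - L / ((n:ℝ) + 3) := by
    intro n
    have h1 : L / ((n:ℝ) + 3) ≤ L / 3 :=
      div_le_div_of_nonneg_left hL.le (by norm_num) (by norm_num)
    have h2 : (0:ℝ) < L / ((n:ℝ)+3) := by positivity
    linarith
  have hz'm : AEStronglyMeasurable z' (volume.restrict (Ioo 0 L)) := by
    rw [← hcover, aestronglyMeasurable_iUnion_iff]
    intro n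
    have h2 : (0:ℝ) < L / ((n:ℝ)+3) := by positivity
    exact (hz'loc _ _ h2 (hseg n) (by linarith)).aestronglyMeasurable
  -- continuity of z on (0, L)
  have hzc : ContinuousOn z (Ioo 0 L) := by
    intro y0 hy0
    obtain ⟨hy1, hy2⟩ := hy0
    set a := y0 / 2 with hadef
    set b := (y0 + L) / 2 with hbdef
    have ha0 : 0 < a := by positivity
    have hay : a < y0 := by rw [hadef]; linarith
    have hyb : y0 < b := by rw [hbdef]; linarith
    have hbL : b < L := by rw [hbdef]; linarith
    have hab : a ≤ b := by linarith
    have hIcc : IntegrableOn z' (uIcc a b) := by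
      rw [uIcc_of_le hab]
      rw [integrableOn_Icc_iff_integrableOn_Ioc]
      exact hz'loc a b ha0 hab hbL
    have hcont : ContinuousOn (fun y => z a + ∫ t in a..y, z' t) (uIcc a b) :=
      continuousOn_const.add (intervalIntegral.continuousOn_primitive_interval hIcc)
    have hcongr : ∀ y ∈ Ioo a b, z y = z a + ∫ t in a..y, z' t := by
      intro y hy
      have := (hAC a y ha0 hy.1.le (hy.2.trans hbL)).2
      linarith [this]
    have hzab : ContinuousOn z (Ioo a b) := by
      refine (hcont.mono ?_).congr hcongr
      rw [uIcc_of_le hab]; exact Ioo_subset_Icc_self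
    have : ContinuousAt z y0 := hzab.continuousAt (Ioo_mem_nhds hay hyb)
    exact this.continuousWithinAt
  have hz'int : ∀ x ∈ Ioo 0 L, IntegrableOn z' (Ioo x L) := by
    rintro x ⟨hx0, hxL⟩
    have hsub : Ioo x L ⊆ Ioo 0 L := Ioo_subset_Ioo hx0.le le_rfl
    have hxα : (0:ℝ) < x ^ (-αs) := Real.rpow_pos_of_pos hx0 _
    have hb1 : IntegrableOn (fun _ : ℝ => (1:ℝ)) (Ioo x L) :=
      integrableOn_const measure_Ioo_lt_top.ne
    refine Integrable.mono' (((hint.mono_set hsub).const_mul (x ^ (-αs))).add hb1)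
      (hz'm.mono_measure (Measure.restrict_mono hsub le_rfl)) ?_
    rw [ae_restrict_iff' measurableSet_Ioo]
    refine Eventually.of_forall fun t ht => ?_
    have h1 : x ^ αs ≤ t ^ αs := Real.rpow_le_rpow hx0.le ht.1.le (by linarith)
    have h2 : x ^ (-αs) * x ^ αs = 1 := by
      rw [← Real.rpow_add hx0]; simp
    rw [Real.norm_eq_abs]
    simp only [Pi.add_apply]
    nlinarith [sq_nonneg (|z' t| - 1), sq_abs (z' t), abs_nonneg (z' t),
      mul_le_mul_of_nonneg_right h1 (sq_nonneg (z' t)), sq_nonneg (z' t)]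
  have hrep : ∀ x ∈ Ioo 0 L, z x = -∫ t in Ioo x L, z' t := by
    rintro x ⟨hx0, hxL⟩
    have hint' := hz'int x ⟨hx0, hxL⟩
    have hmeasx := hz'm.mono_measure
      (Measure.restrict_mono (Ioo_subset_Ioo hx0.le le_rfl) le_rfl)
    have htend : Tendsto (fun b => ∫ t in Ioo x L, (Iio b).indicator z' t)
        (nhdsWithin L (Iio L)) (nhds (∫ t in Ioo x L, z' t)) := by
      apply tendsto_integral_filter_of_dominated_convergence (fun t => ‖z' t‖)
      · exact Eventually.of_forall fun b => hmeasx.indicator measurableSet_Iio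
      · exact Eventually.of_forall fun b =>
          Eventually.of_forall fun t => norm_indicator_le_norm_self z' t
      · exact hint'.norm
      · refine (ae_restrict_iff' measurableSet_Ioo).2 (Eventually.of_forall fun t ht => ?_)
        have hev : ∀ᶠ b in nhdsWithin L (Iio L), t < b :=
          (eventually_gt_nhds ht.2).filter_mono nhdsWithin_le_nhds
        exact Tendsto.congr' (hev.mono fun b hb => (indicator_of_mem (mem_Iio.2 hb) z').symm)
          tendsto_const_nhds
    have heq : ∀ᶠ b in nhdsWithin L (Iio L),
        z b = z x + ∫ t in Ioo x L, (Iio b).indicator z' t := by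
      filter_upwards [Ioo_mem_nhdsLT_of_mem (⟨hxL, le_rfl⟩ : L ∈ Ioc x L)] with b hb
      have h2 := (hAC x b hx0 hb.1.le hb.2).2
      have h3 : ∫ μ in x..b, z' μ = ∫ t in Ioo x b, z' t := by
        rw [intervalIntegral.integral_of_le hb.1.le, integral_Ioc_eq_integral_Ioo]
      have h4 : Ioo x b = Ioo x L ∩ Iio b := by
        ext t
        constructor
        · rintro ⟨h5, h6⟩; exact ⟨⟨h5, h6.trans hb.2⟩, h6⟩
        · rintro ⟨⟨h5, _⟩, h6⟩; exact ⟨h5, h6⟩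
      rw [setIntegral_indicator measurableSet_Iio, ← h4, ← h3]
      linarith [h2]
    have h5 : Tendsto z (nhdsWithin L (Iio L)) (nhds (z x + ∫ t in Ioo x L, z' t)) :=
      Tendsto.congr' (EventuallyEq.symm heq) (tendsto_const_nhds.add htend)
    have h6 := tendsto_nhds_unique h5 hLlim
    linarith [h6]
  have hBint : ∀ x ∈ Ioo 0 L, IntegrableOn (fun t => t ^ γ * z' t ^ 2) (Ioo x L) := by
    rintro x ⟨hx0, hxL⟩
    have hsub : Ioo x L ⊆ Ioo 0 L := Ioo_subset_Ioo hx0.le le_rfl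
    have hz'mx : AEStronglyMeasurable z' (volume.restrict (Ioo x L)) :=
      hz'm.mono_measure (Measure.restrict_mono hsub le_rfl)
    have hmeas : AEStronglyMeasurable (fun t => t ^ γ * z' t ^ 2)
        (volume.restrict (Ioo x L)) := by
      have h1 : Measurable fun t : ℝ => t ^ γ := measurable_rpow_const_aux γ
      have heq : (fun t => t ^ γ * z' t ^ 2) = fun t => t ^ γ * (z' t * z' t) := by
        funext t; ring
      rw [heq]
      exact h1.aestronglyMeasurable.mul (hz'mx.mul hz'mx)
    refine Integrable.mono' ((hint.mono_set hsub).const_mul (x ^ (γ - αs))) hmeas ?_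
    rw [ae_restrict_iff' measurableSet_Ioo]
    refine Eventually.of_forall fun t ht => ?_
    have ht0 : 0 < t := hx0.trans ht.1
    have h1 : t ^ (γ - αs) ≤ x ^ (γ - αs) :=
      Real.rpow_le_rpow_of_nonpos hx0 ht.1.le (by linarith)
    have h2 : t ^ γ = t ^ αs * t ^ (γ - αs) := by
      rw [← Real.rpow_add ht0]; ring_nf
    rw [Real.norm_eq_abs, abs_of_nonneg (mul_nonneg (Real.rpow_nonneg ht0.le _) (sq_nonneg _))]
    calc t ^ γ * z' t ^ 2 = t ^ (γ - αs) * (t ^ αs * z' t ^ 2) := by rw [h2]; ring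
    _ ≤ x ^ (γ - αs) * (t ^ αs * z' t ^ 2) :=
        mul_le_mul_of_nonneg_right h1 (mul_nonneg (Real.rpow_nonneg ht0.le _) (sq_nonneg _))
  have hA : ∀ x ∈ Ioo 0 L, IntegrableOn (fun t => t ^ (-γ)) (Ioo x L) := by
    rintro x ⟨hx0, hxL⟩
    refine (ContinuousOn.integrableOn_Icc ?_).mono_set Ioo_subset_Icc_self
    exact ContinuousOn.rpow_const continuousOn_id
      (fun t ht => Or.inl (ne_of_gt (lt_of_lt_of_le hx0 ht.1)))
  have hAval : ∀ x ∈ Ioo 0 L, ∫ t in Ioo x L, t ^ (-γ) ≤ x ^ (1 - γ) / (γ - 1) := by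
    rintro x ⟨hx0, hxL⟩
    have h1 : ∫ t in Ioo x L, t ^ (-γ) = ∫ t in x..L, t ^ (-γ) := by
      rw [intervalIntegral.integral_of_le hxL.le, integral_Ioc_eq_integral_Ioo]
    have h0 : (0:ℝ) ∉ uIcc x L := by
      rw [uIcc_of_le hxL.le]
      rintro ⟨h0', -⟩
      exact absurd h0' (not_le.2 hx0)
    rw [h1, integral_rpow (Or.inr ⟨(by linarith : -γ < -1).ne, h0⟩)]
    have hu : (0:ℝ) ≤ L ^ (-γ + 1) := Real.rpow_nonneg hL.le _
    have hv : (0:ℝ) ≤ x ^ (-γ + 1) := Real.rpow_nonneg hx0.le _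
    have hne : γ - 1 ≠ 0 := by linarith
    have h2 : (L ^ (-γ + 1) - x ^ (-γ + 1)) / (-γ + 1)
        = (x ^ (-γ + 1) - L ^ (-γ + 1)) / (γ - 1) := by
      rw [show (-γ + 1) = -(γ - 1) by ring, div_neg, ← neg_div, neg_sub]
    rw [h2, show (1 - γ) = -γ + 1 by ring,
      div_le_div_iff_of_pos_right (by linarith : (0:ℝ) < γ - 1)]
    linarith
  have hpt : ∀ x ∈ Ioo 0 L, x ^ (αs - 2) * z x ^ 2
      ≤ (1 / (γ - 1)) * x ^ (αs - 1 - γ) * ∫ t in Ioo x L, t ^ γ * z' t ^ 2 := by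
    rintro x ⟨hx0, hxL⟩
    set B : ℝ := ∫ t in Ioo x L, t ^ γ * z' t ^ 2 with hBdef
    have hBnn : 0 ≤ B := setIntegral_nonneg measurableSet_Ioo fun t ht =>
      mul_nonneg (Real.rpow_nonneg ((hx0.trans ht.1)).le _) (sq_nonneg _)
    set f : ℝ → ℝ := fun t => t ^ (-(γ / 2)) with hfdef
    set g : ℝ → ℝ := fun t => t ^ (γ / 2) * z' t with hgdef
    have hz'mx : AEStronglyMeasurable z' (volume.restrict (Ioo x L)) :=
      hz'm.mono_measure (Measure.restrict_mono (Ioo_subset_Ioo hx0.le le_rfl) le_rfl)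
    have hfm : AEStronglyMeasurable f (volume.restrict (Ioo x L)) :=
      (measurable_rpow_const_aux (-(γ / 2))).aestronglyMeasurable
    have hgm : AEStronglyMeasurable g (volume.restrict (Ioo x L)) :=
      ((measurable_rpow_const_aux (γ / 2)).aestronglyMeasurable).mul hz'mx
    have haein : ∀ᵐ t ∂volume.restrict (Ioo x L), t ∈ Ioo x L :=
      (ae_restrict_iff' measurableSet_Ioo).2 (Eventually.of_forall fun t ht => ht)
    have hfsq : ∀ t ∈ Ioo x L, f t ^ 2 = t ^ (-γ) := by
      intro t ht
      have ht0 : (0:ℝ) < t := hx0.trans ht.1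
      rw [hfdef]
      rw [← Real.rpow_natCast (t ^ (-(γ / 2))) 2, ← Real.rpow_mul ht0.le]
      norm_num
    have hgsq : ∀ t ∈ Ioo x L, g t ^ 2 = t ^ γ * z' t ^ 2 := by
      intro t ht
      have ht0 : (0:ℝ) < t := hx0.trans ht.1
      rw [hgdef]
      rw [mul_pow, ← Real.rpow_natCast (t ^ (γ / 2)) 2, ← Real.rpow_mul ht0.le]
      norm_num
    have hf2 : Integrable (fun t => f t ^ 2) (volume.restrict (Ioo x L)) := by
      refine (hA x ⟨hx0, hxL⟩).congr ?_
      filter_upwards [haein] with t ht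
      exact (hfsq t ht).symm
    have hg2 : Integrable (fun t => g t ^ 2) (volume.restrict (Ioo x L)) := by
      refine (hBint x ⟨hx0, hxL⟩).congr ?_
      filter_upwards [haein] with t ht
      exact (hgsq t ht).symm
    have hfLp : MemLp f (ENNReal.ofReal 2) (volume.restrict (Ioo x L)) := by
      rw [(by norm_num : ENNReal.ofReal (2:ℝ) = 2)]
      exact (memLp_two_iff_integrable_sq hfm).2 hf2
    have hgLp : MemLp g (ENNReal.ofReal 2) (volume.restrict (Ioo x L)) := by
      rw [(by norm_num : ENNReal.ofReal (2:ℝ) = 2)]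
      exact (memLp_two_iff_integrable_sq hgm).2 hg2
    have hCS := integral_mul_norm_le_Lp_mul_Lq
      (Real.holderConjugate_iff.mpr ⟨by norm_num, by norm_num⟩) hfLp hgLp
    have he0 : ∫ t in Ioo x L, ‖f t‖ * ‖g t‖ = ∫ t in Ioo x L, |z' t| := by
      refine integral_congr_ae ?_
      filter_upwards [haein] with t ht
      have ht0 : (0:ℝ) < t := hx0.trans ht.1
      rw [Real.norm_eq_abs, Real.norm_eq_abs, abs_of_nonneg (Real.rpow_nonneg ht0.le _),
        abs_mul, abs_of_nonneg (Real.rpow_nonneg ht0.le _), ← mul_assoc,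
        ← Real.rpow_add ht0]
      norm_num
    have he1 : ∫ t in Ioo x L, ‖f t‖ ^ (2:ℝ) = ∫ t in Ioo x L, t ^ (-γ) := by
      refine integral_congr_ae ?_
      filter_upwards [haein] with t ht
      rw [show ((2:ℝ) = ((2:ℕ):ℝ)) by norm_num, Real.rpow_natCast, Real.norm_eq_abs, sq_abs]
      exact hfsq t ht
    have he2 : ∫ t in Ioo x L, ‖g t‖ ^ (2:ℝ) = B := by
      rw [hBdef]
      refine integral_congr_ae ?_
      filter_upwards [haein] with t ht
      rw [show ((2:ℝ) = ((2:ℕ):ℝ)) by norm_num, Real.rpow_natCast, Real.norm_eq_abs, sq_abs]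
      exact hgsq t ht
    rw [he0, he1, he2] at hCS
    set A : ℝ := ∫ t in Ioo x L, t ^ (-γ) with hAdef
    have hAnn : 0 ≤ A := setIntegral_nonneg measurableSet_Ioo fun t ht =>
      Real.rpow_nonneg ((hx0.trans ht.1)).le _
    have hA'nn : (0:ℝ) ≤ x ^ (1 - γ) / (γ - 1) :=
      div_nonneg (Real.rpow_nonneg hx0.le _) (by linarith)
    have hzabs : |z x| ≤ A ^ ((1:ℝ)/2) * B ^ ((1:ℝ)/2) := by
      calc |z x| = |∫ t in Ioo x L, z' t| := by rw [hrep x ⟨hx0, hxL⟩, abs_neg]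
      _ ≤ ∫ t in Ioo x L, |z' t| := by
          simpa [Real.norm_eq_abs] using
            norm_integral_le_integral_norm (μ := volume.restrict (Ioo x L)) z'
      _ ≤ A ^ ((1:ℝ)/2) * B ^ ((1:ℝ)/2) := hCS
    have hzabs2 : |z x| ≤ (x ^ (1 - γ) / (γ - 1)) ^ ((1:ℝ)/2) * B ^ ((1:ℝ)/2) := by
      refine hzabs.trans (mul_le_mul_of_nonneg_right ?_ (Real.rpow_nonneg hBnn _))
      exact Real.rpow_le_rpow hAnn (hAval x ⟨hx0, hxL⟩) (by norm_num)
    have hsq : z x ^ 2 ≤ (x ^ (1 - γ) / (γ - 1)) * B := by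
      have h8 : |z x| ^ 2 ≤ ((x ^ (1 - γ) / (γ - 1)) ^ ((1:ℝ)/2) * B ^ ((1:ℝ)/2)) ^ 2 :=
        pow_le_pow_left₀ (abs_nonneg _) hzabs2 2
      have h9 : ((x ^ (1 - γ) / (γ - 1)) ^ ((1:ℝ)/2)) ^ 2 = x ^ (1 - γ) / (γ - 1) := by
        rw [← Real.rpow_natCast (_ ^ ((1:ℝ)/2)) 2, ← Real.rpow_mul hA'nn]
        norm_num
      have h10 : (B ^ ((1:ℝ)/2)) ^ 2 = B := by
        rw [← Real.rpow_natCast (B ^ ((1:ℝ)/2)) 2, ← Real.rpow_mul hBnn]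
        norm_num
      calc z x ^ 2 = |z x| ^ 2 := (sq_abs _).symm
      _ ≤ _ := h8
      _ = (x ^ (1 - γ) / (γ - 1)) * B := by rw [mul_pow, h9, h10]
    calc x ^ (αs - 2) * z x ^ 2 ≤ x ^ (αs - 2) * ((x ^ (1 - γ) / (γ - 1)) * B) :=
      mul_le_mul_of_nonneg_left hsq (Real.rpow_nonneg hx0.le _)
    _ = (1 / (γ - 1)) * x ^ (αs - 1 - γ) * B := by
        rw [show x ^ (αs - 1 - γ) = x ^ (αs - 2) * x ^ (1 - γ) by
          rw [← Real.rpow_add hx0]; ring_nf]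
        ring
  have hγ0 : (0:ℝ) < γ - 1 := by linarith
  set C : ℝ := 4 / (αs - 1) ^ 2 with hCdef
  have hC : (0:ℝ) < C := div_pos (by norm_num) (pow_pos (by linarith) 2)
  set R : ℝ := ∫ x in Ioo 0 L, x ^ αs * (z' x) ^ 2 with hRdef
  have hR : 0 ≤ R := setIntegral_nonneg measurableSet_Ioo fun x hx =>
    mul_nonneg (Real.rpow_nonneg hx.1.le _) (sq_nonneg _)
  -- measurable representative of z'
  have hz'ae : AEMeasurable z' (volume.restrict (Ioo 0 L)) := hz'm.aemeasurable
  set w : ℝ → ℝ := hz'ae.mk z' with hwdef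
  have hwm : Measurable w := hz'ae.measurable_mk
  have hw : z' =ᵐ[volume.restrict (Ioo 0 L)] w := hz'ae.ae_eq_mk
  set ψ : ℝ → ℝ≥0∞ := fun t => ENNReal.ofReal (t ^ γ * w t ^ 2) with hψdef
  have hψm : Measurable ψ := by
    apply Measurable.ennreal_ofReal
    exact ((measurable_rpow_const_aux γ)).mul (hwm.pow_const 2)
  set c : ℝ → ℝ := fun x => (1 / (γ - 1)) * x ^ (αs - 1 - γ) with hcdef
  have hcm : Measurable fun x => ENNReal.ofReal (c x) := by
    apply Measurable.ennreal_ofReal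
    exact measurable_const.mul (measurable_rpow_const_aux (αs - 1 - γ))
  set Φ : ℝ → ℝ → ℝ≥0∞ := fun x t => if x < t then ENNReal.ofReal (c x) * ψ t else 0 with hΦdef
  have haein : ∀ᵐ x ∂volume.restrict (Ioo 0 L), x ∈ Ioo 0 L :=
    (ae_restrict_iff' measurableSet_Ioo).2 (Eventually.of_forall fun x hx => hx)
  -- B as lintegral
  have hBl : ∀ x ∈ Ioo 0 L, ENNReal.ofReal (∫ t in Ioo x L, t ^ γ * z' t ^ 2)
      = ∫⁻ t in Ioo x L, ψ t := by
    rintro x hx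
    have hsub : Ioo x L ⊆ Ioo 0 L := Ioo_subset_Ioo hx.1.le le_rfl
    have hnn : 0 ≤ᵐ[volume.restrict (Ioo x L)] fun t => t ^ γ * z' t ^ 2 :=
      (ae_restrict_iff' measurableSet_Ioo).2 (Eventually.of_forall fun t ht =>
        mul_nonneg (Real.rpow_nonneg (hx.1.trans ht.1).le _) (sq_nonneg _))
    rw [ofReal_integral_eq_lintegral_ofReal (hBint x hx) hnn]
    refine lintegral_congr_ae ?_
    filter_upwards [ae_restrict_of_ae_restrict_of_subset hsub hw] with t ht
    rw [hψdef, ht]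
  have key : ∫⁻ x in Ioo 0 L, ENNReal.ofReal (x ^ (αs - 2) * z x ^ 2)
      ≤ ENNReal.ofReal (C * R) := by
    calc ∫⁻ x in Ioo 0 L, ENNReal.ofReal (x ^ (αs - 2) * z x ^ 2)
        ≤ ∫⁻ x in Ioo 0 L, ENNReal.ofReal (c x) * ∫⁻ t in Ioo x L, ψ t := by
          refine lintegral_mono_ae ?_
          filter_upwards [haein] with x hx
          calc ENNReal.ofReal (x ^ (αs - 2) * z x ^ 2)
              ≤ ENNReal.ofReal (c x * ∫ t in Ioo x L, t ^ γ * z' t ^ 2) :=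
                ENNReal.ofReal_le_ofReal (by rw [hcdef]; exact hpt x hx)
            _ = ENNReal.ofReal (c x) * ENNReal.ofReal (∫ t in Ioo x L, t ^ γ * z' t ^ 2) :=
                ENNReal.ofReal_mul (by
                  rw [hcdef]
                  exact mul_nonneg (by positivity) (Real.rpow_nonneg hx.1.le _))
            _ = ENNReal.ofReal (c x) * ∫⁻ t in Ioo x L, ψ t := by rw [hBl x hx]
      _ = ∫⁻ x in Ioo 0 L, ∫⁻ t in Ioo 0 L, Φ x t := by
          refine setLIntegral_congr_fun measurableSet_Ioo (fun x hx => ?_)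
          have hseteq : Ioi x ∩ Ioo 0 L = Ioo x L := by
            ext t
            constructor
            · rintro ⟨h1, _, h3⟩; exact ⟨h1, h3⟩
            · rintro ⟨h1, h2⟩; exact ⟨h1, hx.1.trans h1, h2⟩
          calc ENNReal.ofReal (c x) * ∫⁻ t in Ioo x L, ψ t
              = ∫⁻ t in Ioo x L, ENNReal.ofReal (c x) * ψ t := by
                rw [lintegral_const_mul' _ _ ENNReal.ofReal_ne_top]
            _ = ∫⁻ t in Ioo 0 L, (Ioi x).indicator (fun t => ENNReal.ofReal (c x) * ψ t) t := by
                rw [lintegral_indicator measurableSet_Ioi, Measure.restrict_restrict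
                  measurableSet_Ioi, hseteq]
            _ = ∫⁻ t in Ioo 0 L, Φ x t := by
                refine lintegral_congr fun t => ?_
                rw [hΦdef]
                simp only [indicator_apply, mem_Ioi]
      _ = ∫⁻ t in Ioo 0 L, ∫⁻ x in Ioo 0 L, Φ x t := by
          refine lintegral_lintegral_swap ?_
          refine Measurable.aemeasurable ?_
          have h1 : Measurable fun p : ℝ × ℝ => ENNReal.ofReal (c p.1) * ψ p.2 :=
            (hcm.comp measurable_fst).mul (hψm.comp measurable_snd)
          exact Measurable.ite (measurableSet_lt measurable_fst measurable_snd) h1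
            measurable_const
      _ = ∫⁻ t in Ioo 0 L, ENNReal.ofReal (C * (t ^ αs * w t ^ 2)) := by
          refine setLIntegral_congr_fun measurableSet_Ioo (fun t ht => ?_)
          have ht0 : (0:ℝ) < t := ht.1
          have hseteq : Iio t ∩ Ioo 0 L = Ioo 0 t := by
            ext x
            constructor
            · rintro ⟨h1, h2, _⟩; exact ⟨h2, h1⟩
            · rintro ⟨h1, h2⟩; exact ⟨h2, h1, h2.trans ht.2⟩
          have hδ : (-1:ℝ) < αs - 1 - γ := by rw [hγdef]; linarith
          have hδ1 : αs - 1 - γ + 1 = (αs - 1)/2 := by rw [hγdef]; ring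
          have hcint : IntegrableOn c (Ioo 0 t) := by
            have hrpowint : IntervalIntegrable (fun x : ℝ => x ^ (αs - 1 - γ)) volume 0 t :=
              intervalIntegral.intervalIntegrable_rpow' hδ
            have h2 : IntegrableOn (fun x : ℝ => x ^ (αs - 1 - γ)) (Ioc 0 t) :=
              (intervalIntegrable_iff_integrableOn_Ioc_of_le ht0.le).1 hrpowint
            exact Integrable.const_mul (h2.mono_set Ioo_subset_Ioc_self) _
          have hcnn : 0 ≤ᵐ[volume.restrict (Ioo 0 t)] c :=
            (ae_restrict_iff' measurableSet_Ioo).2 (Eventually.of_forall fun x hx => by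
              rw [hcdef]
              exact mul_nonneg (by positivity) (Real.rpow_nonneg hx.1.le _))
          have hcval : ∫ x in Ioo 0 t, c x = C * t ^ ((αs - 1)/2) := by
            rw [hcdef]
            rw [MeasureTheory.integral_const_mul]
            rw [← integral_Ioc_eq_integral_Ioo, ← intervalIntegral.integral_of_le ht0.le]
            rw [integral_rpow (Or.inl hδ), hδ1]
            rw [Real.zero_rpow (by linarith : (αs-1)/2 ≠ 0)]
            rw [hCdef, hγdef]
            have habs : ∀ T : ℝ, 1/((αs+1)/2 - 1) * ((T - 0)/((αs-1)/2)) = 4/(αs-1)^2 * T := by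
              intro T
              have h : αs - 1 ≠ 0 := by linarith
              have h3 : (αs - 1)^2 ≠ 0 := pow_ne_zero 2 h
              have h2 : 1 - αs * 2 + αs ^ 2 ≠ 0 := by intro hz; exact h3 (by nlinarith)
              rw [show (αs+1)/2 - 1 = (αs-1)/2 by ring, sub_zero]
              field_simp
              ring
            exact habs _
          calc ∫⁻ x in Ioo 0 L, Φ x t
              = ∫⁻ x in Ioo 0 L, (Iio t).indicator (fun x => ENNReal.ofReal (c x)) x * ψ t := by
                refine lintegral_congr fun x => ?_
                rw [hΦdef]
                simp only [indicator_apply, mem_Iio]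
                split_ifs <;> simp
            _ = (∫⁻ x in Ioo 0 L, (Iio t).indicator (fun x => ENNReal.ofReal (c x)) x) * ψ t :=
                lintegral_mul_const' _ _ ENNReal.ofReal_ne_top
            _ = (∫⁻ x in Ioo 0 t, ENNReal.ofReal (c x)) * ψ t := by
                rw [lintegral_indicator measurableSet_Iio, Measure.restrict_restrict
                  measurableSet_Iio, hseteq]
            _ = ENNReal.ofReal (C * t ^ ((αs - 1)/2)) * ψ t := by
                rw [← ofReal_integral_eq_lintegral_ofReal hcint hcnn, hcval]
            _ = ENNReal.ofReal (C * (t ^ αs * w t ^ 2)) := by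
                rw [hψdef, ← ENNReal.ofReal_mul (by positivity)]
                congr 1
                have hradd : t ^ ((αs - 1)/2) * t ^ γ = t ^ αs := by
                  rw [← Real.rpow_add ht0, hγdef]
                  ring_nf
                rw [← hradd]
                ring
      _ = ENNReal.ofReal (C * R) := by
          have h1 : ∀ᵐ t ∂volume.restrict (Ioo 0 L),
              ENNReal.ofReal (C * (t ^ αs * w t ^ 2))
                = ENNReal.ofReal C * ENNReal.ofReal (t ^ αs * z' t ^ 2) := by
            filter_upwards [hw] with t ht
            rw [← ht, ENNReal.ofReal_mul hC.le]
          rw [lintegral_congr_ae h1, lintegral_const_mul' _ _ ENNReal.ofReal_ne_top,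
            ← ofReal_integral_eq_lintegral_ofReal hint ((ae_restrict_iff' measurableSet_Ioo).2
              (Eventually.of_forall fun t ht =>
                mul_nonneg (Real.rpow_nonneg ht.1.le _) (sq_nonneg _))),
            ← ENNReal.ofReal_mul hC.le, ← hRdef]
  -- conclude
  have hnnLHS : 0 ≤ᵐ[volume.restrict (Ioo 0 L)] fun x => x ^ (αs - 2) * z x ^ 2 :=
    (ae_restrict_iff' measurableSet_Ioo).2 (Eventually.of_forall fun x hx =>
      mul_nonneg (Real.rpow_nonneg hx.1.le _) (sq_nonneg _))
  have hmLHS : AEStronglyMeasurable (fun x => x ^ (αs - 2) * z x ^ 2)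
      (volume.restrict (Ioo 0 L)) := by
    have hzm : AEStronglyMeasurable z (volume.restrict (Ioo 0 L)) :=
      hzc.aestronglyMeasurable measurableSet_Ioo
    have h1 : AEStronglyMeasurable (fun x : ℝ => x ^ (αs - 2) * (z x * z x))
        (volume.restrict (Ioo 0 L)) :=
      ((measurable_rpow_const_aux (αs - 2)).aestronglyMeasurable).mul
        (hzm.mul hzm)
    refine h1.congr (Eventually.of_forall fun x => by ring)
  rw [integral_eq_lintegral_of_nonneg_ae hnnLHS hmLHS]
  calc (∫⁻ x in Ioo 0 L, ENNReal.ofReal (x ^ (αs - 2) * z x ^ 2)).toReal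
      ≤ (ENNReal.ofReal (C * R)).toReal :=
        ENNReal.toReal_mono ENNReal.ofReal_ne_top key
    _ = C * R := ENNReal.toReal_ofReal (mul_nonneg hC.le hR)
end
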